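/- For every integer d ≥ 2, the variance of the logarithm of D_d satisfies Var(ln D_d) = ∑_{j=1}^{d−1} ( ψ₁((j+1)/2) − ψ₁((d+1)/2) ), where ψ₁ is the trigamma function. -/

import Mathlib

open MeasureTheory ProbabilityTheory Real Filter Finset
open scoped ENNReal NNReal

/-- The Beta(a,b) distribution on ℝ: density x^(a-1)(1-x)^(b-1)/B(a,b) on (0,1),
where B(a,b) = Γ(a)Γ(b)/Γ(a+b). -/
noncomputable def betaMeasure (a b : ℝ) : Measure ℝ :=
  volume.withDensity fun x =>
    ENNReal.ofReal (if x ∈ Set.Ioo (0 : ℝ) 1 then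
      x ^ (a - 1) * (1 - x) ^ (b - 1) / (Real.Gamma a * Real.Gamma b / Real.Gamma (a + b))
    else 0)

/-- `X` has the Beta(a,b) distribution under `P`. -/
def HasBetaDist {Ω : Type*} [MeasurableSpace Ω] (P : Measure Ω) (X : Ω → ℝ) (a b : ℝ) : Prop :=
  Measurable X ∧ Measure.map X P = _root_.betaMeasure a b

/-- The digamma function ψ = (log Γ)'. -/
noncomputable def digamma (x : ℝ) : ℝ := deriv (fun y => Real.log (Real.Gamma y)) x

/-- The trigamma function ψ₁ = ψ'. -/
noncomputable def trigamma (x : ℝ) : ℝ := deriv digamma x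


lemma analyticAt_realGamma {x : ℝ} (hx : 0 < x) : AnalyticAt ℝ Real.Gamma x := by
  have hopen : IsOpen {z : ℂ | 0 < z.re} := isOpen_lt continuous_const Complex.continuous_re
  have hd : DifferentiableOn ℂ Complex.Gamma {z : ℂ | 0 < z.re} := by
    intro z hz
    refine (Complex.differentiableAt_Gamma z fun m => ?_).differentiableWithinAt
    intro h
    simp only [Set.mem_setOf_eq, h] at hz
    simp at hz
    linarith [hz, Nat.cast_nonneg (α := ℝ) m]
  have hA : AnalyticAt ℂ Complex.Gamma (x : ℂ) :=
    hd.analyticAt (hopen.mem_nhds (by simpa using hx))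
  have h1 : AnalyticAt ℝ (fun t : ℝ => (Complex.Gamma (t : ℂ)).re) x := by
    exact (Complex.reCLM.analyticAt _).comp ((hA.restrictScalars).comp
      (Complex.ofRealCLM.analyticAt x))
  have : (fun t : ℝ => (Complex.Gamma (t : ℂ)).re) = Real.Gamma := by
    funext t; rw [Complex.Gamma_ofReal]; rfl
  rwa [this] at h1

lemma analyticAt_deriv_realGamma {x : ℝ} (hx : 0 < x) : AnalyticAt ℝ (deriv Real.Gamma) x := by
  have h : AnalyticOnNhd ℝ Real.Gamma (Set.Ioi 0) := fun y hy => analyticAt_realGamma hy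
  exact h.deriv x hx

lemma realGamma_diffAt {y : ℝ} (hy : 0 < y) : DifferentiableAt ℝ Real.Gamma y :=
  Real.differentiableAt_Gamma (fun m => by
    intro h; rw [h] at hy; have := Nat.cast_nonneg (α := ℝ) m; linarith)

lemma hasDerivAt_logGamma {y : ℝ} (hy : 0 < y) :
    HasDerivAt (fun t => Real.log (Real.Gamma t)) (deriv Real.Gamma y / Real.Gamma y) y :=
  (realGamma_diffAt hy).hasDerivAt.log (Real.Gamma_pos_of_pos hy).ne'

lemma digamma_eq {y : ℝ} (hy : 0 < y) : digamma y = deriv Real.Gamma y / Real.Gamma y :=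
  (hasDerivAt_logGamma hy).deriv

lemma differentiableAt_digamma {y : ℝ} (hy : 0 < y) : DifferentiableAt ℝ digamma y := by
  have heq : digamma =ᶠ[nhds y] fun t => deriv Real.Gamma t / Real.Gamma t := by
    filter_upwards [isOpen_Ioi.mem_nhds (show y ∈ Set.Ioi 0 from hy)] with t ht
    exact digamma_eq ht
  refine DifferentiableAt.congr_of_eventuallyEq ?_ heq
  exact ((analyticAt_deriv_realGamma hy).differentiableAt).div (realGamma_diffAt hy)
    (Real.Gamma_pos_of_pos hy).ne'


lemma betaCast {x : ℝ} (h0 : 0 ≤ x) (h1 : x ≤ 1) (a b : ℝ) :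
    (x:ℂ) ^ ((a:ℂ) - 1) * ((1:ℂ) - (x:ℂ)) ^ ((b:ℂ) - 1)
      = ((x ^ (a-1) * (1-x) ^ (b-1) : ℝ) : ℂ) := by
  have e1 : ((a:ℂ) - 1) = ((a - 1 : ℝ) : ℂ) := by push_cast; ring
  have e2 : ((b:ℂ) - 1) = ((b - 1 : ℝ) : ℂ) := by push_cast; ring
  have e3 : ((1:ℂ) - (x:ℂ)) = ((1 - x : ℝ) : ℂ) := by push_cast; ring
  rw [e1, e2, e3, ← Complex.ofReal_cpow h0, ← Complex.ofReal_cpow (by linarith),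
    ← Complex.ofReal_mul]

lemma betaIntegrand_integrableOn {a b : ℝ} (ha : 0 < a) (hb : 0 < b) :
    IntegrableOn (fun x : ℝ => x ^ (a-1) * (1-x) ^ (b-1)) (Set.Ioo 0 1) := by
  have h := Complex.betaIntegral_convergent (u := (a:ℂ)) (v := (b:ℂ)) (by simpa) (by simpa)
  rw [intervalIntegrable_iff_integrableOn_Ioo_of_le zero_le_one] at h
  have hre := h.re
  refine (integrable_congr ?_).mp hre
  filter_upwards [ae_restrict_mem measurableSet_Ioo] with x hx
  rw [betaCast hx.1.le hx.2.le a b]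
  simp

lemma betaIntegral_value {a b : ℝ} (ha : 0 < a) (hb : 0 < b) :
    ∫ x in Set.Ioo (0:ℝ) 1, x ^ (a-1) * (1-x) ^ (b-1)
      = Real.Gamma a * Real.Gamma b / Real.Gamma (a + b) := by
  have key := Complex.Gamma_mul_Gamma_eq_betaIntegral (s := (a:ℂ)) (t := (b:ℂ))
    (by simpa) (by simpa)
  have hG : Complex.Gamma ((a:ℂ) + b) ≠ 0 := by
    rw [← Complex.ofReal_add, Complex.Gamma_ofReal]
    exact_mod_cast (Real.Gamma_pos_of_pos (by linarith)).ne'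
  have hbeta : Complex.betaIntegral a b
      = ((∫ x in Set.Ioo (0:ℝ) 1, x ^ (a-1) * (1-x) ^ (b-1) : ℝ) : ℂ) := by
    rw [Complex.betaIntegral, intervalIntegral.integral_of_le zero_le_one]
    calc ∫ x in Set.Ioc (0:ℝ) 1, (x:ℂ) ^ ((a:ℂ)-1) * ((1:ℂ)-(x:ℂ)) ^ ((b:ℂ)-1)
        = ∫ x in Set.Ioc (0:ℝ) 1, ((x ^ (a-1) * (1-x) ^ (b-1) : ℝ) : ℂ) := by
          refine setIntegral_congr_ae measurableSet_Ioc
            (Filter.Eventually.of_forall fun x hx => ?_)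
          exact betaCast hx.1.le hx.2 a b
      _ = ((∫ x in Set.Ioc (0:ℝ) 1, x ^ (a-1) * (1-x) ^ (b-1) : ℝ) : ℂ) := integral_ofReal
      _ = ((∫ x in Set.Ioo (0:ℝ) 1, x ^ (a-1) * (1-x) ^ (b-1) : ℝ) : ℂ) := by
          rw [MeasureTheory.integral_Ioc_eq_integral_Ioo]
  have : Complex.betaIntegral a b = Complex.Gamma a * Complex.Gamma b / Complex.Gamma (a + b) := by
    rw [eq_div_iff hG]
    linear_combination -key
  rw [hbeta] at this
  have := congrArg Complex.re this
  simpa [← Complex.ofReal_add, Complex.Gamma_ofReal, ← Complex.ofReal_mul,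
    ← Complex.ofReal_div] using this


lemma abs_log_le_rpow {x c : ℝ} (h0 : 0 < x) (h1 : x < 1) (hc : 0 < c) :
    |Real.log x| ≤ (1/c) * x ^ (-c) := by
  have hlog : Real.log x < 0 := Real.log_neg h0 h1
  rw [abs_of_neg hlog]
  have h2 : Real.log (x ^ (-c)) ≤ x ^ (-c) := by
    have := Real.log_le_sub_one_of_pos (Real.rpow_pos_of_pos h0 (-c))
    linarith
  rw [Real.log_rpow h0] at h2
  calc -Real.log x = (1/c) * (-c * Real.log x) := by field_simp
    _ ≤ (1/c) * x ^ (-c) := mul_le_mul_of_nonneg_left h2 (by positivity)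

lemma measurable_betaIntegrand (k : ℕ) (s b : ℝ) :
    Measurable (fun x : ℝ => (Real.log x) ^ k * (x ^ (s-1) * (1-x) ^ (b-1))) := by
  exact ((Real.measurable_log.pow_const k).mul
    ((measurable_id'.pow_const _).mul ((measurable_const.sub measurable_id').pow_const _)))

lemma betaIntegrand_log_integrableOn (k : ℕ) {a b : ℝ} (ha : 0 < a) (hb : 0 < b) :
    IntegrableOn (fun x : ℝ => |Real.log x| ^ k * (x ^ (a-1) * (1-x) ^ (b-1)))
      (Set.Ioo 0 1) := by
  set c : ℝ := a / (2 * (k + 1)) with hc_def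
  have hc : 0 < c := by positivity
  have hbound : IntegrableOn
      (fun x : ℝ => (1/c) ^ k * (x ^ (a/2-1) * (1-x) ^ (b-1))) (Set.Ioo 0 1) :=
    (betaIntegrand_integrableOn (half_pos ha) hb).const_mul _
  refine Integrable.mono hbound ?_ ?_
  · exact ((Real.measurable_log.abs.pow_const k).mul
      ((measurable_id'.pow_const _).mul
        ((measurable_const.sub measurable_id').pow_const _))).aestronglyMeasurable
  · filter_upwards [ae_restrict_mem measurableSet_Ioo] with x hx
    obtain ⟨h0, h1⟩ := hx
    have hx1 : (0:ℝ) ≤ 1 - x := by linarith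
    have hnn : (0:ℝ) ≤ x ^ (a-1) * (1-x) ^ (b-1) :=
      mul_nonneg (Real.rpow_nonneg h0.le _) (Real.rpow_nonneg hx1 _)
    have hnn2 : (0:ℝ) ≤ x ^ (a/2-1) * (1-x) ^ (b-1) :=
      mul_nonneg (Real.rpow_nonneg h0.le _) (Real.rpow_nonneg hx1 _)
    rw [Real.norm_eq_abs, Real.norm_eq_abs,
      abs_of_nonneg (mul_nonneg (pow_nonneg (abs_nonneg _) _) hnn),
      abs_of_nonneg (mul_nonneg (pow_nonneg (by positivity) _) hnn2)]
    have hlog : |Real.log x| ^ k ≤ (1/c) ^ k * x ^ (-(c * k)) := by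
      calc |Real.log x| ^ k ≤ ((1/c) * x ^ (-c)) ^ k :=
            pow_le_pow_left₀ (abs_nonneg _) (abs_log_le_rpow h0 h1 hc) k
        _ = (1/c) ^ k * (x ^ (-c)) ^ k := mul_pow _ _ _
        _ = (1/c) ^ k * x ^ (-(c * k)) := by
            rw [← Real.rpow_natCast (x ^ (-c)) k, ← Real.rpow_mul h0.le]
            ring_nf
    have hxk : x ^ (-(c * k)) ≤ x ^ (-(a/2)) := by
      apply Real.rpow_le_rpow_of_exponent_ge h0 h1.le
      have : c * k ≤ a / 2 := by
        rw [hc_def]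
        rw [div_mul_eq_mul_div, div_le_div_iff₀ (by positivity) (by norm_num : (0:ℝ) < 2)]
        have : (k:ℝ) ≤ k + 1 := by linarith
        nlinarith [ha.le, Nat.cast_nonneg (α := ℝ) k]
      linarith
    calc |Real.log x| ^ k * (x ^ (a-1) * (1-x) ^ (b-1))
        ≤ ((1/c) ^ k * x ^ (-(a/2))) * (x ^ (a-1) * (1-x) ^ (b-1)) := by
          apply mul_le_mul_of_nonneg_right _ hnn
          exact le_trans hlog (mul_le_mul_of_nonneg_left hxk (by positivity))
      _ = (1/c) ^ k * (x ^ (-(a/2) + (a-1)) * (1-x) ^ (b-1)) := by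
          rw [Real.rpow_add h0]; ring
      _ = (1/c) ^ k * (x ^ (a/2-1) * (1-x) ^ (b-1)) := by
          rw [show -(a/2) + (a-1) = a/2 - 1 by ring]

lemma hasDerivAt_rpow_exponent {x : ℝ} (hx : 0 < x) (s : ℝ) :
    HasDerivAt (fun t : ℝ => x ^ (t - 1)) (Real.log x * x ^ (s-1)) s := by
  have h : HasDerivAt (fun t : ℝ => (t - 1) * Real.log x) (Real.log x) s := by
    simpa using ((hasDerivAt_id s).sub_const 1).mul_const (Real.log x)
  have h2 := h.exp
  have heq : (fun t : ℝ => Real.exp ((t - 1) * Real.log x)) = fun t : ℝ => x ^ (t-1) := by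
    funext t; rw [Real.rpow_def_of_pos hx, mul_comm]
  rw [heq] at h2
  convert h2 using 1
  rw [Real.rpow_def_of_pos hx, mul_comm]; ring

lemma hasDerivAt_betaAux {a b : ℝ} (ha : 0 < a) (hb : 0 < b) (k : ℕ) :
    HasDerivAt (fun s => ∫ x in Set.Ioo (0:ℝ) 1, (Real.log x) ^ k * (x ^ (s-1) * (1-x) ^ (b-1)))
      (∫ x in Set.Ioo (0:ℝ) 1, (Real.log x) ^ (k+1) * (x ^ (a-1) * (1-x) ^ (b-1))) a := by
  have hmain := hasDerivAt_integral_of_dominated_loc_of_deriv_le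
    (μ := volume.restrict (Set.Ioo (0:ℝ) 1))
    (F := fun s x => (Real.log x) ^ k * (x ^ (s-1) * (1-x) ^ (b-1)))
    (F' := fun s x => (Real.log x) ^ (k+1) * (x ^ (s-1) * (1-x) ^ (b-1)))
    (x₀ := a)
    (bound := fun x => |Real.log x| ^ (k+1) * (x ^ (a/2-1) * (1-x) ^ (b-1)))
    (Metric.ball_mem_nhds a (half_pos ha))
    (Filter.Eventually.of_forall fun s => (measurable_betaIntegrand k s b).aestronglyMeasurable)
    ?hint
    ((measurable_betaIntegrand (k+1) a b).aestronglyMeasurable)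
    ?hbound
    ?hboundint
    ?hdiff
  · exact hmain.2
  case hint =>
    refine Integrable.mono (betaIntegrand_log_integrableOn k ha hb)
      (measurable_betaIntegrand k a b).aestronglyMeasurable ?_
    filter_upwards [ae_restrict_mem measurableSet_Ioo] with x hx
    have hnn : (0:ℝ) ≤ x ^ (a-1) * (1-x) ^ (b-1) :=
      mul_nonneg (Real.rpow_nonneg hx.1.le _) (Real.rpow_nonneg (by linarith [hx.2]) _)
    rw [Real.norm_eq_abs, Real.norm_eq_abs, abs_mul, abs_pow,
      abs_of_nonneg hnn, abs_of_nonneg (mul_nonneg (pow_nonneg (abs_nonneg _) _) hnn)]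
  case hbound =>
    filter_upwards [ae_restrict_mem measurableSet_Ioo] with x hx
    intro s hs
    obtain ⟨h0, h1⟩ := hx
    have hx1 : (0:ℝ) ≤ 1 - x := by linarith
    rw [Metric.mem_ball, Real.dist_eq, abs_lt] at hs
    have hse : a/2 - 1 ≤ s - 1 := by linarith [hs.1]
    rw [Real.norm_eq_abs, abs_mul, abs_pow, abs_of_nonneg
      (mul_nonneg (Real.rpow_nonneg h0.le _) (Real.rpow_nonneg hx1 _))]
    apply mul_le_mul_of_nonneg_left _ (pow_nonneg (abs_nonneg _) _)
    exact mul_le_mul_of_nonneg_right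
      (Real.rpow_le_rpow_of_exponent_ge h0 h1.le hse) (Real.rpow_nonneg hx1 _)
  case hboundint => exact betaIntegrand_log_integrableOn (k+1) (half_pos ha) hb
  case hdiff =>
    filter_upwards [ae_restrict_mem measurableSet_Ioo] with x hx
    intro s _
    have h := ((hasDerivAt_rpow_exponent hx.1 s).mul_const ((1-x) ^ (b-1))).const_mul
      ((Real.log x) ^ k)
    exact h.congr_deriv (by ring)


noncomputable def betaF (b a : ℝ) : ℝ := ∫ x in Set.Ioo (0:ℝ) 1, x ^ (a-1) * (1-x) ^ (b-1)
noncomputable def betaF1 (b a : ℝ) : ℝ :=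
  ∫ x in Set.Ioo (0:ℝ) 1, Real.log x * (x ^ (a-1) * (1-x) ^ (b-1))
noncomputable def betaF2 (b a : ℝ) : ℝ :=
  ∫ x in Set.Ioo (0:ℝ) 1, (Real.log x) ^ 2 * (x ^ (a-1) * (1-x) ^ (b-1))

lemma betaF_eq {a b : ℝ} (ha : 0 < a) (hb : 0 < b) :
    betaF b a = Real.Gamma a * Real.Gamma b / Real.Gamma (a + b) :=
  betaIntegral_value ha hb

lemma betaF_pos {a b : ℝ} (ha : 0 < a) (hb : 0 < b) : 0 < betaF b a := by
  rw [betaF_eq ha hb]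
  exact div_pos (mul_pos (Real.Gamma_pos_of_pos ha) (Real.Gamma_pos_of_pos hb))
    (Real.Gamma_pos_of_pos (by linarith))

lemma hasDerivAt_betaF {a b : ℝ} (ha : 0 < a) (hb : 0 < b) :
    HasDerivAt (betaF b) (betaF1 b a) a := by
  have h := hasDerivAt_betaAux ha hb 0
  simp only [pow_zero, one_mul, zero_add, pow_one] at h
  exact h

lemma hasDerivAt_betaF1 {a b : ℝ} (ha : 0 < a) (hb : 0 < b) :
    HasDerivAt (betaF1 b) (betaF2 b a) a := by
  have h := hasDerivAt_betaAux ha hb 1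
  simp only [pow_one] at h
  exact h

lemma betaF1_div_eq {a b : ℝ} (ha : 0 < a) (hb : 0 < b) :
    betaF1 b a / betaF b a = digamma a - digamma (a + b) := by
  have h1 : HasDerivAt (fun s => Real.log (betaF b s)) (betaF1 b a / betaF b a) a :=
    (hasDerivAt_betaF ha hb).log (betaF_pos ha hb).ne'
  have heq : (fun s => Real.log (betaF b s)) =ᶠ[nhds a]
      fun s => Real.log (Real.Gamma s) + Real.log (Real.Gamma b)
        - Real.log (Real.Gamma (s + b)) := by
    filter_upwards [isOpen_Ioi.mem_nhds (show a ∈ Set.Ioi 0 from ha)] with s hs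
    rw [betaF_eq hs hb, Real.log_div
      (mul_pos (Real.Gamma_pos_of_pos hs) (Real.Gamma_pos_of_pos hb)).ne'
      (Real.Gamma_pos_of_pos (by simp only [Set.mem_Ioi] at hs; linarith)).ne',
      Real.log_mul (Real.Gamma_pos_of_pos hs).ne' (Real.Gamma_pos_of_pos hb).ne']
  have hsa : HasDerivAt (fun s => Real.log (Real.Gamma s)) (digamma a) a := by
    rw [digamma_eq ha]; exact hasDerivAt_logGamma ha
  have hsb : HasDerivAt (fun s => Real.log (Real.Gamma (s + b))) (digamma (a + b)) a := by
    have := hasDerivAt_logGamma (show (0:ℝ) < a + b by linarith)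
    rw [← digamma_eq (show (0:ℝ) < a + b by linarith)] at this
    exact this.comp_add_const a b
  have h2 : HasDerivAt (fun s => Real.log (Real.Gamma s) + Real.log (Real.Gamma b)
      - Real.log (Real.Gamma (s + b))) (digamma a - digamma (a + b)) a :=
    (hsa.add_const _).sub hsb
  rw [← h1.deriv, heq.deriv_eq, h2.deriv]

lemma beta_log_variance {a b : ℝ} (ha : 0 < a) (hb : 0 < b) :
    betaF2 b a / betaF b a - (betaF1 b a / betaF b a) ^ 2 = trigamma a - trigamma (a + b) := by
  have hab : (0:ℝ) < a + b := by linarith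
  have hF := betaF_pos ha hb
  have hH : HasDerivAt (fun s => betaF1 b s / betaF b s)
      ((betaF2 b a * betaF b a - betaF1 b a * betaF1 b a) / (betaF b a) ^ 2) a :=
    (hasDerivAt_betaF1 ha hb).div (hasDerivAt_betaF ha hb) hF.ne'
  have heq : (fun s => betaF1 b s / betaF b s) =ᶠ[nhds a]
      fun s => digamma s - digamma (s + b) := by
    filter_upwards [isOpen_Ioi.mem_nhds (show a ∈ Set.Ioi 0 from ha)] with s hs
    exact betaF1_div_eq hs hb
  have h2 : deriv (fun s => digamma s - digamma (s + b)) a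
      = trigamma a - trigamma (a + b) := by
    rw [deriv_fun_sub (differentiableAt_digamma ha) ?_, deriv_comp_add_const]
    · rfl
    · exact ((differentiableAt_digamma hab).comp a
        ((differentiableAt_id).add_const b))
  have h3 := hH.deriv
  rw [heq.deriv_eq, h2] at h3
  rw [h3]
  field_simp

noncomputable def betaDens (a b : ℝ) : ℝ → ℝ := fun x =>
  if x ∈ Set.Ioo (0:ℝ) 1 then
    x ^ (a - 1) * (1 - x) ^ (b - 1) / (Real.Gamma a * Real.Gamma b / Real.Gamma (a + b))
  else 0

lemma measurable_betaDens (a b : ℝ) : Measurable (betaDens a b) :=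
  Measurable.ite measurableSet_Ioo
    (((measurable_id'.pow_const _).mul
      ((measurable_const.sub measurable_id').pow_const _)).div_const _) measurable_const

lemma betaMeasure_eq (a b : ℝ) :
    _root_.betaMeasure a b
      = volume.withDensity (fun x => ((betaDens a b x).toNNReal : ℝ≥0∞)) := by
  rfl

lemma betaDens_nonneg {a b : ℝ} (ha : 0 < a) (hb : 0 < b) (x : ℝ) : 0 ≤ betaDens a b x := by
  rw [betaDens]
  split_ifs with hx
  · have hB : 0 < Real.Gamma a * Real.Gamma b / Real.Gamma (a + b) :=
      div_pos (mul_pos (Real.Gamma_pos_of_pos ha) (Real.Gamma_pos_of_pos hb))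
        (Real.Gamma_pos_of_pos (by linarith))
    exact div_nonneg (mul_nonneg (Real.rpow_nonneg hx.1.le _)
      (Real.rpow_nonneg (by linarith [hx.2]) _)) hB.le
  · exact le_rfl

lemma betaDens_smul_eq {a b : ℝ} (ha : 0 < a) (hb : 0 < b) (f : ℝ → ℝ) :
    (fun x => ((betaDens a b x).toNNReal : ℝ≥0) • f x)
      = Set.indicator (Set.Ioo (0:ℝ) 1)
          (fun x => (f x * (x ^ (a-1) * (1-x) ^ (b-1))) / betaF b a) := by
  funext x
  rw [NNReal.smul_def, Real.coe_toNNReal _ (betaDens_nonneg ha hb x)]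
  by_cases hx : x ∈ Set.Ioo (0:ℝ) 1
  · rw [Set.indicator_of_mem hx, betaDens, if_pos hx, betaF_eq ha hb, smul_eq_mul]
    ring
  · rw [Set.indicator_of_notMem hx, betaDens, if_neg hx]
    simp

lemma integral_betaMeasure {a b : ℝ} (ha : 0 < a) (hb : 0 < b) (f : ℝ → ℝ) :
    ∫ x, f x ∂(_root_.betaMeasure a b)
      = (∫ x in Set.Ioo (0:ℝ) 1, f x * (x ^ (a-1) * (1-x) ^ (b-1))) / betaF b a := by
  rw [betaMeasure_eq,
    integral_withDensity_eq_integral_smul ((measurable_betaDens a b).real_toNNReal) f]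
  rw [show (fun x => ((betaDens a b x).toNNReal : ℝ≥0) • f x)
    = Set.indicator (Set.Ioo (0:ℝ) 1)
        (fun x => (f x * (x ^ (a-1) * (1-x) ^ (b-1))) / betaF b a) from
    betaDens_smul_eq ha hb f]
  rw [integral_indicator measurableSet_Ioo, integral_div]

lemma integrable_betaMeasure {a b : ℝ} (ha : 0 < a) (hb : 0 < b) {f : ℝ → ℝ}
    (hi : IntegrableOn (fun x => f x * (x ^ (a-1) * (1-x) ^ (b-1))) (Set.Ioo 0 1)) :
    Integrable f (_root_.betaMeasure a b) := by
  rw [betaMeasure_eq]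
  refine (integrable_withDensity_iff_integrable_smul (g := f)
    ((measurable_betaDens a b).real_toNNReal)).2 ?_
  rw [betaDens_smul_eq ha hb f, integrable_indicator_iff measurableSet_Ioo]
  exact hi.div_const _

lemma memLp_log_betaMeasure {a b : ℝ} (ha : 0 < a) (hb : 0 < b) :
    MemLp Real.log 2 (_root_.betaMeasure a b) := by
  refine (memLp_two_iff_integrable_sq Real.measurable_log.aestronglyMeasurable).2 ?_
  refine integrable_betaMeasure ha hb ?_
  have h := betaIntegrand_log_integrableOn 2 ha hb
  refine (integrable_congr ?_).mp h
  filter_upwards [] with x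
  rw [sq_abs]

lemma betaMeasure_compl_Ioo (a b : ℝ) : _root_.betaMeasure a b (Set.Ioo (0:ℝ) 1)ᶜ = 0 := by
  rw [_root_.betaMeasure, withDensity_apply _ measurableSet_Ioo.compl]
  rw [show ∫⁻ x in (Set.Ioo (0:ℝ) 1)ᶜ, ENNReal.ofReal (if x ∈ Set.Ioo (0:ℝ) 1 then
      x ^ (a - 1) * (1 - x) ^ (b - 1) / (Real.Gamma a * Real.Gamma b / Real.Gamma (a + b))
    else 0) = ∫⁻ _ in (Set.Ioo (0:ℝ) 1)ᶜ, 0 from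
    setLIntegral_congr_fun measurableSet_Ioo.compl
      (fun x hx => by rw [if_neg hx]; simp)]
  simp

lemma variance_log_beta {Ω : Type*} [MeasurableSpace Ω] (P : Measure Ω) [IsProbabilityMeasure P]
    {Y : Ω → ℝ} {a b : ℝ} (ha : 0 < a) (hb : 0 < b) (hY : Measurable Y)
    (hmap : Measure.map Y P = _root_.betaMeasure a b) :
    MemLp (fun ω => Real.log (Y ω)) 2 P ∧
      variance (fun ω => Real.log (Y ω)) P = trigamma a - trigamma (a + b) := by
  have hmem2 : MemLp Real.log 2 (Measure.map Y P) := by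
    rw [hmap]; exact memLp_log_betaMeasure ha hb
  have hmem : MemLp (fun ω => Real.log (Y ω)) 2 P :=
    (memLp_map_measure_iff Real.measurable_log.aestronglyMeasurable hY.aemeasurable).1 hmem2
  refine ⟨hmem, ?_⟩
  rw [variance_eq_sub hmem]
  have h1 : ∫ ω, Real.log (Y ω) ∂P = betaF1 b a / betaF b a :=
    calc ∫ ω, Real.log (Y ω) ∂P = ∫ y, Real.log y ∂(Measure.map Y P) :=
          (integral_map hY.aemeasurable Real.measurable_log.aestronglyMeasurable).symm
      _ = betaF1 b a / betaF b a := by rw [hmap, integral_betaMeasure ha hb]; rfl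
  have h2 : ∫ ω, (Real.log (Y ω)) ^ 2 ∂P = betaF2 b a / betaF b a :=
    calc ∫ ω, (Real.log (Y ω)) ^ 2 ∂P = ∫ y, (Real.log y) ^ 2 ∂(Measure.map Y P) :=
          (integral_map hY.aemeasurable
            ((Real.measurable_log.pow_const 2)).aestronglyMeasurable).symm
      _ = betaF2 b a / betaF b a := by rw [hmap, integral_betaMeasure ha hb]; rfl
  have hfin : ∫ ω, ((fun ω => Real.log (Y ω)) ^ 2) ω ∂P = betaF2 b a / betaF b a := by
    rw [← h2]; rfl
  rw [hfin, h1]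
  exact beta_log_variance ha hb

lemma variance_congr_ae {Ω : Type*} [MeasurableSpace Ω] {μ : Measure Ω} {X Y : Ω → ℝ}
    (h : X =ᵐ[μ] Y) : variance X μ = variance Y μ := by
  have hi : μ[X] = μ[Y] := integral_congr_ae h
  simp only [variance, evariance]
  rw [hi]
  refine congrArg ENNReal.toReal (lintegral_congr_ae ?_)
  filter_upwards [h] with ω hω
  rw [hω]

theorem stmt15
    {Ω : Type*} [MeasurableSpace Ω] (P : Measure Ω) [IsProbabilityMeasure P]
    (X : ℕ → ℕ → Ω → ℝ)
    (hindep : ∀ d : ℕ, 2 ≤ d →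
      iIndepFun
        (fun j : {j : ℕ // 1 ≤ j ∧ j ≤ d - 1} => X d j) P)
    (hX : ∀ d j : ℕ, 2 ≤ d → 1 ≤ j → j ≤ d - 1 →
      HasBetaDist P (X d j) (((j : ℝ) + 1) / 2) (((d : ℝ) - (j : ℝ)) / 2)) :
    ∀ d : ℕ, 2 ≤ d →
      variance (fun ω => Real.log (∏ j ∈ Finset.Icc 1 (d - 1), X d j ω)) P = ∑ j ∈ Finset.Icc 1 (d - 1), (trigamma (((j : ℝ) + 1) / 2) - trigamma (((d : ℝ) + 1) / 2)) := by
  intro d hd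
  have hsub : ∀ j ∈ Finset.Icc 1 (d-1), 1 ≤ j ∧ j ≤ d - 1 :=
    fun j hj => Finset.mem_Icc.mp hj
  have hja : ∀ j : ℕ, (0:ℝ) < ((j:ℝ)+1)/2 := fun j => by positivity
  have hjb : ∀ j ∈ Finset.Icc 1 (d-1), (0:ℝ) < ((d:ℝ)-(j:ℝ))/2 := by
    intro j hj
    obtain ⟨h1, h2⟩ := Finset.mem_Icc.mp hj
    have hjd : j < d := by omega
    have : (j:ℝ) < d := by exact_mod_cast hjd
    linarith
  have haepos : ∀ᵐ ω ∂P, ∀ j ∈ Finset.Icc 1 (d-1), X d j ω ∈ Set.Ioo (0:ℝ) 1 := by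
    rw [Filter.eventually_all_finset]
    intro j hj
    obtain ⟨h1, h2⟩ := Finset.mem_Icc.mp hj
    obtain ⟨hmeas, hmap⟩ := hX d j hd h1 h2
    have h0 : P ((X d j) ⁻¹' (Set.Ioo (0:ℝ) 1)ᶜ) = 0 := by
      rw [← Measure.map_apply hmeas measurableSet_Ioo.compl, hmap, betaMeasure_compl_Ioo]
    rw [ae_iff]
    exact h0
  have hlog : (fun ω => Real.log (∏ j ∈ Finset.Icc 1 (d-1), X d j ω)) =ᵐ[P]
      (fun ω => ∑ j ∈ Finset.Icc 1 (d-1), Real.log (X d j ω)) := by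
    filter_upwards [haepos] with ω hω
    exact Real.log_prod (fun j hj => (hω j hj).1.ne')
  rw [variance_congr_ae hlog]
  have key : ∀ j ∈ Finset.Icc 1 (d-1), MemLp (fun ω => Real.log (X d j ω)) 2 P ∧
      variance (fun ω => Real.log (X d j ω)) P
        = trigamma (((j:ℝ)+1)/2) - trigamma (((d:ℝ)+1)/2) := by
    intro j hj
    obtain ⟨h1, h2⟩ := Finset.mem_Icc.mp hj
    obtain ⟨hmeas, hmap⟩ := hX d j hd h1 h2
    have h := variance_log_beta P (hja j) (hjb j hj) hmeas hmap
    refine ⟨h.1, ?_⟩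
    rw [h.2, show (((j:ℝ)+1)/2 + ((d:ℝ)-(j:ℝ))/2) = ((d:ℝ)+1)/2 by ring]
  have hsum : (fun ω => ∑ j ∈ Finset.Icc 1 (d-1), Real.log (X d j ω))
      = ∑ j ∈ Finset.Icc 1 (d-1), (fun ω => Real.log (X d j ω)) := by
    funext ω; rw [Finset.sum_apply]
  have hpair : Set.Pairwise ↑(Finset.Icc 1 (d-1)) (fun i j =>
      IndepFun (fun ω => Real.log (X d i ω)) (fun ω => Real.log (X d j ω)) P) := by
    intro i hi j hj hij
    rw [Finset.mem_coe, Finset.mem_Icc] at hi hj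
    have hind := (hindep d hd).indepFun
      (i := (⟨i, hi⟩ : {j : ℕ // 1 ≤ j ∧ j ≤ d - 1}))
      (j := (⟨j, hj⟩ : {j : ℕ // 1 ≤ j ∧ j ≤ d - 1}))
      (by simpa using hij)
    exact hind.comp Real.measurable_log Real.measurable_log
  rw [hsum, IndepFun.variance_sum (fun j hj => (key j hj).1) hpair]
  exact Finset.sum_congr rfl (fun j hj => (key j hj).2)
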